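/- Suppose {X_α, φ_{βα}} is a strong Mittag-Leffler inverse system of Hausdorff uniform spaces and f_α : X_α → Y are compatible maps into a fixed uniform space Y (i.e., f_α ∘ φ_{βα} = f_β for β ≥ α), each of which generates the uniform structure on Y, has chain lifting, has approximate uniqueness of chain lifts, and has complete fibers. Then the induced map f = lim f_α : lim X_α → Y generates the uniform structure on Y, has chain lifting, has approximate uniqueness of chain lifts, and has complete fibers. -/

import Mathlib

open Filter Set

universe u v

section Chains

variable {X : Type u} {Y : Type v}

/-- `c` is an `E`-chain: consecutive members of the list lie in `E`. -/
def IsEChain (E : Set (X × X)) (c : List X) : Prop :=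
  c.Chain' (fun a b => (a, b) ∈ E)

/-- Two chains (necessarily of the same length) are `E`-close. -/
def EClose (E : Set (X × X)) (c d : List X) : Prop :=
  List.Forall₂ (fun a b => (a, b) ∈ E) c d

variable [UniformSpace X] [UniformSpace Y]

/-- `f` generates the uniform structure on `Y`: it is uniformly continuous,
surjective, and images of entourages are entourages. -/
def GeneratesUS (f : X → Y) : Prop :=
  UniformContinuous f ∧ Function.Surjective f ∧
    ∀ E ∈ uniformity X, Prod.map f f '' E ∈ uniformity Y

/-- `f` has chain lifting. -/
def ChainLifting (f : X → Y) : Prop :=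
  ∀ E ∈ uniformity X, ∃ F ∈ uniformity X, ∀ x : X, ∀ c : List Y,
    IsEChain (Prod.map f f '' F) c → c.head? = some (f x) →
      ∃ d : List X, IsEChain E d ∧ d.head? = some x ∧ d.map f = c

/-- `f` has uniqueness of chain lifts. -/
def UniqueChainLifts (f : X → Y) : Prop :=
  ∀ E ∈ uniformity X, ∃ F ∈ uniformity X, F ⊆ E ∧ ∀ c d : List X,
    IsEChain F c → IsEChain F d → c.head? = d.head? → c.map f = d.map f → c = d

/-- `f` has approximate uniqueness of chain lifts. -/
def ApproxUniqueChainLifts (f : X → Y) : Prop :=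
  ∀ E ∈ uniformity X, ∃ F ∈ uniformity X, F ⊆ E ∧ ∀ c d : List X,
    IsEChain F c → IsEChain F d → c.head? = d.head? → c.map f = d.map f → EClose E c d

/-- `f` has strong approximate uniqueness of chain lifts. -/
def StrongApproxUniqueChainLifts (f : X → Y) : Prop :=
  ∀ E ∈ uniformity X, ∃ F ∈ uniformity X, F ⊆ E ∧ ∀ c d : List X,
    IsEChain F c → IsEChain F d → c.head? = d.head? → c.map f = d.map f → EClose F c d

/-- `f` is a uniform covering map. -/
def IsUCM (f : X → Y) : Prop :=
  GeneratesUS f ∧ ChainLifting f ∧ UniqueChainLifts f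

/-- `h` has `F`-bounded fibers. -/
def BoundedFibers {Z : Type*} (F : Set (X × X)) (h : X → Z) : Prop :=
  ∀ a b : X, h a = h b → (a, b) ∈ F

/-- `f` has complete fibers (each fiber, with the subspace uniformity, is complete). -/
def CompleteFibers (f : X → Y) : Prop :=
  ∀ y : Y, IsComplete (f ⁻¹' {y})

/-- `f` is approximated by uniform covering maps. -/
def ApproxByUCMs (f : X → Y) : Prop :=
  ∀ E ∈ uniformity X, ∃ F ∈ uniformity X, F ⊆ E ∧
    ∃ (Z : Type (max u v)) (_ : UniformSpace Z) (h : X → Z) (g : Z → Y),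
      (∀ x, g (h x) = f x) ∧ IsUCM g ∧ BoundedFibers F h

end Chains

/-- An inverse system of uniform spaces over a preordered index set, with
uniformly continuous bonding maps `bond i j h : Xs j → Xs i` for `i ≤ j`. -/
structure InvSys (ι : Type*) [Preorder ι] (Xs : ι → Type*)
    [∀ i, UniformSpace (Xs i)] where
  bond : ∀ i j, i ≤ j → Xs j → Xs i
  uc : ∀ i j (h : i ≤ j), UniformContinuous (bond i j h)
  bond_self : ∀ i (x : Xs i), bond i i le_rfl x = x
  bond_comp : ∀ i j k (hij : i ≤ j) (hjk : j ≤ k) (x : Xs k),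
    bond i j hij (bond j k hjk x) = bond i k (hij.trans hjk) x

/-- The inverse limit (the set of threads), carrying the inverse limit uniformity:
the subspace uniformity of the product uniformity, whose basic entourages are
preimages of entourages under the projections (since the index set is directed). -/
abbrev InvLim {ι : Type*} [Preorder ι] {Xs : ι → Type*} [∀ i, UniformSpace (Xs i)]
    (S : InvSys ι Xs) : Type _ :=
  { x : ∀ i, Xs i // ∀ i j (h : i ≤ j), S.bond i j h (x j) = x i }

/-- The strong Mittag-Leffler property of an inverse system. -/
def StrongML {ι : Type*} [Preorder ι] {Xs : ι → Type*} [∀ i, UniformSpace (Xs i)]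
    (S : InvSys ι Xs) : Prop :=
  ∀ i : ι, ∃ j : ι, ∃ h : i ≤ j,
    Set.range (S.bond i j h) = Set.range (fun x : InvLim S => x.1 i)

section InvLimAux

variable {ι : Type*} [Preorder ι] {Xs : ι → Type*} [∀ i, UniformSpace (Xs i)]
  (S : InvSys ι Xs)

theorem invLim_uniformity :
    uniformity (InvLim S) = ⨅ i, Filter.comap
      (fun p : InvLim S × InvLim S => (p.1.1 i, p.2.1 i)) (uniformity (Xs i)) := by
  rw [uniformity_subtype, Pi.uniformity, Filter.comap_iInf]
  exact iInf_congr fun i => by rw [Filter.comap_comap]; rfl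

theorem invLim_comap_mono {i j : ι} (h : i ≤ j) :
    Filter.comap (fun p : InvLim S × InvLim S => (p.1.1 j, p.2.1 j)) (uniformity (Xs j)) ≤
      Filter.comap (fun p : InvLim S × InvLim S => (p.1.1 i, p.2.1 i)) (uniformity (Xs i)) := by
  intro s hs
  rcases Filter.mem_comap.1 hs with ⟨D, hD, hsub⟩
  refine Filter.mem_comap.2 ⟨(fun q : Xs j × Xs j => (S.bond i j h q.1, S.bond i j h q.2)) ⁻¹' D,
    S.uc i j h hD, ?_⟩
  intro p hp
  apply hsub
  have h1 := p.1.2 i j h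
  have h2 := p.2.2 i j h
  simp only [Set.mem_preimage] at hp ⊢
  rwa [h1, h2] at hp

theorem invLim_proj_mem (i : ι) {D : Set (Xs i × Xs i)} (hD : D ∈ uniformity (Xs i)) :
    {p : InvLim S × InvLim S | (p.1.1 i, p.2.1 i) ∈ D} ∈ uniformity (InvLim S) := by
  rw [invLim_uniformity]
  exact Filter.mem_iInf_of_mem i (Filter.preimage_mem_comap hD)

theorem invLim_uniformContinuous_proj (i : ι) :
    UniformContinuous (fun x : InvLim S => x.1 i) :=
  (Pi.uniformContinuous_proj Xs i).comp uniformContinuous_subtype_val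

theorem invLim_basis [IsDirected ι (· ≤ ·)] [Nonempty ι]
    {E : Set (InvLim S × InvLim S)} (hE : E ∈ uniformity (InvLim S)) :
    ∃ i, ∃ D ∈ uniformity (Xs i),
      {p : InvLim S × InvLim S | (p.1.1 i, p.2.1 i) ∈ D} ⊆ E := by
  rw [invLim_uniformity] at hE
  have hdir : Directed (· ≥ ·) (fun i => Filter.comap
      (fun p : InvLim S × InvLim S => (p.1.1 i, p.2.1 i)) (uniformity (Xs i))) := by
    intro i j
    obtain ⟨k, hik, hjk⟩ := directed_of (· ≤ ·) i j
    exact ⟨k, invLim_comap_mono S hik, invLim_comap_mono S hjk⟩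
  rcases (Filter.mem_iInf_of_directed hdir E).1 hE with ⟨i, hi⟩
  rcases Filter.mem_comap.1 hi with ⟨D, hD, hsub⟩
  exact ⟨i, D, hD, hsub⟩

end InvLimAux
/-- The inverse limit of a strong Mittag-Leffler inverse system of Hausdorff
uniform spaces with compatible generalized uniform covering maps (with complete
fibers) to a fixed uniform space `Y` is again such a map: it generates the
uniform structure on `Y`, has chain lifting, has approximate uniqueness of chain
lifts, and has complete fibers. -/
theorem invLim_generalizedUCM
    {ι : Type*} [Preorder ι] [IsDirected ι (· ≤ ·)] [Nonempty ι]
    {Xs : ι → Type*} [∀ i, UniformSpace (Xs i)] [∀ i, T2Space (Xs i)]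
    {Y : Type*} [UniformSpace Y]
    (S : InvSys ι Xs) (hml : StrongML S)
    (fι : ∀ i, Xs i → Y)
    (hcompat : ∀ i j (h : i ≤ j) (x : Xs j), fι i (S.bond i j h x) = fι j x)
    (hgen : ∀ i, GeneratesUS (fι i))
    (hcl : ∀ i, ChainLifting (fι i))
    (hau : ∀ i, ApproxUniqueChainLifts (fι i))
    (hcf : ∀ i, CompleteFibers (fι i))
    (f : InvLim S → Y)
    (hf : ∀ (i : ι) (x : InvLim S), f x = fι i (x.1 i)) :
    GeneratesUS f ∧ ChainLifting f ∧ ApproxUniqueChainLifts f ∧ CompleteFibers f := by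
  classical
  have hproj : ∀ i, UniformContinuous (fun x : InvLim S => x.1 i) :=
    fun i => invLim_uniformContinuous_proj S i
  -- f as composition
  have hfcomp : ∀ i, f = (fι i) ∘ (fun x : InvLim S => x.1 i) := fun i => funext fun x => hf i x
  obtain ⟨i₀⟩ := ‹Nonempty ι›
  refine ⟨⟨?_, ?_, ?_⟩, ?_, ?_, ?_⟩
  · -- uniform continuity
    rw [hfcomp i₀]
    exact (hgen i₀).1.comp (hproj i₀)
  · -- surjectivity
    intro y
    obtain ⟨j, hij, hrange⟩ := hml i₀
    obtain ⟨a, ha⟩ := (hgen j).2.1 y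
    have : S.bond i₀ j hij a ∈ Set.range (fun x : InvLim S => x.1 i₀) := by
      rw [← hrange]; exact Set.mem_range_self a
    obtain ⟨x, hx⟩ := this
    exact ⟨x, by rw [hf i₀ x, show x.1 i₀ = S.bond i₀ j hij a from hx, hcompat i₀ j hij a, ha]⟩
  · -- images of entourages
    intro E hE
    obtain ⟨i, D, hD, hsub⟩ := invLim_basis S hE
    obtain ⟨j, hij, hrange⟩ := hml i
    have hD' : (fun q : Xs j × Xs j => (S.bond i j hij q.1, S.bond i j hij q.2)) ⁻¹' D ∈
        uniformity (Xs j) := S.uc i j hij hD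
    refine Filter.mem_of_superset ((hgen j).2.2 _ hD') ?_
    rintro ⟨y₁, y₂⟩ ⟨⟨a, b⟩, hab, hq⟩
    have hthread : ∀ c : Xs j, ∃ x : InvLim S, x.1 i = S.bond i j hij c := by
      intro c
      have : S.bond i j hij c ∈ Set.range (fun x : InvLim S => x.1 i) := by
        rw [← hrange]; exact Set.mem_range_self c
      exact this
    obtain ⟨x₁, hx₁⟩ := hthread a
    obtain ⟨x₂, hx₂⟩ := hthread b
    refine ⟨(x₁, x₂), hsub ?_, ?_⟩
    · simp only [Set.mem_setOf_eq, hx₁, hx₂]; exact hab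
    · have e1 : f x₁ = fι j a := by rw [hf i x₁, hx₁, hcompat i j hij a]
      have e2 : f x₂ = fι j b := by rw [hf i x₂, hx₂, hcompat i j hij b]
      simp only [Prod.map] at hq ⊢
      rw [e1, e2]
      exact hq
  · -- chain lifting
    intro E hE
    obtain ⟨i, D, hD, hsub⟩ := invLim_basis S hE
    obtain ⟨j, hij, hrange⟩ := hml i
    set Ej : Set (Xs j × Xs j) :=
      (fun q : Xs j × Xs j => (S.bond i j hij q.1, S.bond i j hij q.2)) ⁻¹' D with hEj
    have hEjm : Ej ∈ uniformity (Xs j) := S.uc i j hij hD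
    obtain ⟨Fj, hFj, hlift⟩ := hcl j Ej hEjm
    refine ⟨{p : InvLim S × InvLim S | (p.1.1 j, p.2.1 j) ∈ Fj},
      invLim_proj_mem S j hFj, ?_⟩
    intro x c hc hhead
    have hthread : ∀ a : Xs j, ∃ z : InvLim S, z.1 i = S.bond i j hij a := by
      intro a
      have : S.bond i j hij a ∈ Set.range (fun z : InvLim S => z.1 i) := by
        rw [← hrange]; exact Set.mem_range_self a
      exact this
    choose L hL using hthread
    have hcimg : IsEChain (Prod.map (fι j) (fι j) '' Fj) c := by
      refine hc.imp ?_
      rintro y₁ y₂ ⟨⟨u, v⟩, huv, hq⟩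
      refine ⟨(u.1 j, v.1 j), huv, ?_⟩
      simp only [Prod.map] at hq ⊢
      rw [← hf j u, ← hf j v]
      exact hq
    obtain ⟨dj, hdj, hdjhead, hdjmap⟩ := hlift (x.1 j) c hcimg (by rw [hhead, hf j x])
    set M : Xs j → InvLim S := fun a => if a = x.1 j then x else L a with hM
    have hMi : ∀ a, (M a).1 i = S.bond i j hij a := by
      intro a
      by_cases h : a = x.1 j
      · simp only [hM, if_pos h, h]; exact (x.2 i j hij).symm
      · simp only [hM, if_neg h]; exact hL a
    have hfM : ∀ a, f (M a) = fι j a := by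
      intro a
      rw [hf i (M a), hMi a, hcompat i j hij a]
    refine ⟨dj.map M, ?_, ?_, ?_⟩
    · rw [IsEChain, List.Chain', List.isChain_map]
      refine hdj.imp ?_
      intro a b hab
      apply hsub
      simp only [Set.mem_setOf_eq, hMi a, hMi b]
      exact hab
    · rw [List.head?_map, hdjhead]
      simp [hM]
    · rw [List.map_map, ← hdjmap]
      exact List.map_congr_left fun a _ => hfM a
  · -- approximate uniqueness of chain lifts
    intro E hE
    obtain ⟨i, D, hD, hsub⟩ := invLim_basis S hE
    obtain ⟨Fi, hFi, hFiD, hauniq⟩ := hau i D hD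
    refine ⟨{p : InvLim S × InvLim S | (p.1.1 i, p.2.1 i) ∈ Fi} ∩ E,
      Filter.inter_mem (invLim_proj_mem S i hFi) hE, Set.inter_subset_right, ?_⟩
    intro c d hc hd hhead hmap
    have hci : IsEChain Fi (c.map (fun x : InvLim S => x.1 i)) := by
      rw [IsEChain, List.Chain', List.isChain_map]
      exact hc.imp fun _ _ hab => hab.1
    have hdi : IsEChain Fi (d.map (fun x : InvLim S => x.1 i)) := by
      rw [IsEChain, List.Chain', List.isChain_map]
      exact hd.imp fun _ _ hab => hab.1
    have hmapi : (c.map (fun x : InvLim S => x.1 i)).map (fι i) =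
        (d.map (fun x : InvLim S => x.1 i)).map (fι i) := by
      rw [List.map_map, List.map_map, ← hfcomp i, hmap]
    have hheadi : (c.map (fun x : InvLim S => x.1 i)).head? =
        (d.map (fun x : InvLim S => x.1 i)).head? := by
      rw [List.head?_map, List.head?_map, hhead]
    have hclose := hauniq _ _ hci hdi hheadi hmapi
    rw [EClose, List.forall₂_map_left_iff, List.forall₂_map_right_iff] at hclose
    exact hclose.imp fun _ _ h => hsub h
  · -- complete fibers
    intro y
    intro ℓ hℓ hle
    have hne : ℓ.NeBot := hℓ.1
    have hcoord : ∀ i, ∃ x ∈ (fι i) ⁻¹' {y}, Filter.map (fun z : InvLim S => z.1 i) ℓ ≤ nhds x := by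
      intro i
      refine hcf i y (Filter.map (fun z : InvLim S => z.1 i) ℓ) (hℓ.map (hproj i)) ?_
      refine Filter.le_principal_iff.2 ?_
      refine Filter.mem_map.2 (Filter.mem_of_superset (Filter.le_principal_iff.1 hle) ?_)
      intro z hz
      simp only [Set.mem_preimage, Set.mem_singleton_iff] at hz ⊢
      rw [← hf i z]; exact hz
    choose x hxfib hxlim using hcoord
    have hthread : ∀ i j (h : i ≤ j), S.bond i j h (x j) = x i := by
      intro i j h
      have h1 : Filter.map (fun z : InvLim S => z.1 i) ℓ ≤ nhds (S.bond i j h (x j)) := by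
        have : Filter.Tendsto (S.bond i j h) (Filter.map (fun z : InvLim S => z.1 j) ℓ)
            (nhds (S.bond i j h (x j))) :=
          ((S.uc i j h).continuous.tendsto (x j)).comp (hxlim j)
        rw [Filter.tendsto_map'_iff] at this
        have heq : (S.bond i j h) ∘ (fun z : InvLim S => z.1 j) =
            (fun z : InvLim S => z.1 i) := funext fun z => z.2 i j h
        rwa [heq] at this
      exact tendsto_nhds_unique h1 (hxlim i)
    refine ⟨⟨x, hthread⟩, ?_, ?_⟩
    · simp only [Set.mem_preimage, Set.mem_singleton_iff]
      rw [hf i₀]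
      exact hxfib i₀
    · have : Filter.Tendsto (id : InvLim S → InvLim S) ℓ (nhds ⟨x, hthread⟩) := by
        rw [tendsto_subtype_rng, tendsto_pi_nhds]
        intro i
        exact hxlim i
      exact this
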